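/- The vector v has pseudo-norm -1 with respect to η: one has -(v 0)*conj(v 0) + (v 1)*conj(v 1) + (v 2)*conj(v 2) = -1, i.e. the sum over a of (η a a)*(v a)*conj(v a) equals -1. -/

import Mathlib

open Complex ComplexConjugate Matrix

noncomputable def etaM : Matrix (Fin 3) (Fin 3) ℂ :=
  Matrix.diagonal ![-1, 1, 1]

noncomputable def vE (X Y : ℝ) (Λ : ℂ) : Fin 3 → ℂ :=
  let ℰ : ℂ := -(X : ℂ) - Λ * conj Λ + Complex.I * Y
  ![(ℰ - 1) / (2 * Real.sqrt X), Λ / Real.sqrt X, (ℰ + 1) / (2 * Real.sqrt X)]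

noncomputable def PhiM (X Y : ℝ) (Λ : ℂ) : Matrix (Fin 3) (Fin 3) ℂ :=
  Matrix.of fun a b => etaM a b + 2 * conj (vE X Y Λ a) * vE X Y Λ b

lemma key (X Y : ℝ) (hX : 0 < X) (Λ : ℂ) :
    -(vE X Y Λ 0 * conj (vE X Y Λ 0)) + vE X Y Λ 1 * conj (vE X Y Λ 1)
        + vE X Y Λ 2 * conj (vE X Y Λ 2) = -1 := by
  have hs : (Real.sqrt X : ℂ) ≠ 0 :=
    Complex.ofReal_ne_zero.mpr (by positivity)
  have hsq : (Real.sqrt X : ℂ) * (Real.sqrt X : ℂ) = (X : ℂ) := by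
    rw [← Complex.ofReal_mul, Real.mul_self_sqrt hX.le]
  simp only [vE, Matrix.cons_val_zero, Matrix.cons_val_one, Matrix.head_cons,
    Matrix.cons_val_two, Matrix.tail_cons, map_div₀, map_sub, map_add, _root_.map_mul, map_neg,
    _root_.map_one, Complex.conj_ofNat, Complex.conj_conj, Complex.conj_ofReal, Complex.conj_I]
  field_simp
  linear_combination 4 * hsq

/-- The vector `v` has pseudo-norm `-1` with respect to `η`:
`-(v 0) conj(v 0) + (v 1) conj(v 1) + (v 2) conj(v 2) = -1`,
i.e. `∑ a, η a a * v a * conj (v a) = -1`. -/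
theorem vE_pseudo_norm (X Y : ℝ) (hX : 0 < X) (Λ : ℂ) :
    -(vE X Y Λ 0 * conj (vE X Y Λ 0)) + vE X Y Λ 1 * conj (vE X Y Λ 1)
        + vE X Y Λ 2 * conj (vE X Y Λ 2) = -1 ∧
      ∑ a : Fin 3, etaM a a * vE X Y Λ a * conj (vE X Y Λ a) = -1 := by
  refine ⟨key X Y hX Λ, ?_⟩
  have := key X Y hX Λ
  simp only [Fin.sum_univ_three, etaM, Matrix.diagonal_apply_eq, Matrix.cons_val_zero,
    Matrix.cons_val_one, Matrix.head_cons, Matrix.cons_val_two, Matrix.tail_cons]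
  linear_combination this
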